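/- Let A and B be bounded self-adjoint operators on a nontrivial complex Hilbert space X, let P be an orthogonal projection on X commuting with B (PB = BP), and let δ ≥ 0. Assume that ‖(A − iI)⁻¹ − P(B − iI)⁻¹P‖ ≤ δ and ‖(I − P)(A − iI)⁻¹‖ ≤ δ. Then for every z ∈ ℂ with z ∉ σ(A) ∪ σ(B) one has ‖(A − zI)⁻¹ − P(B − zI)⁻¹P‖ ≤ 2δ·(1 + (|z| + 1)/dist(z, σ(A)))·(1 + (|z| + 1)/dist(z, σ(B))). -/

import Mathlib

set_option linter.unusedSectionVars false
set_option maxHeartbeats 1000000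

section Aux

variable {X : Type*} [NormedAddCommGroup X] [InnerProductSpace ℂ X] [CompleteSpace X] [Nontrivial X]

lemma aux_isUnit (A : X →L[ℂ] X) (z : ℂ) (hz : z ∉ spectrum ℂ A) :
    IsUnit (A - z • (1 : X →L[ℂ] X)) := by
  have h := spectrum.notMem_iff.mp hz
  rw [Algebra.algebraMap_eq_smul_one] at h
  simpa using h.neg

lemma aux_resolvent_norm (A : X →L[ℂ] X) (hA : IsSelfAdjoint A) (z : ℂ)
    (hz : z ∉ spectrum ℂ A) :
    ‖Ring.inverse (A - z • (1 : X →L[ℂ] X))‖ ≤ 1 / Metric.infDist z (spectrum ℂ A) := by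
  obtain ⟨u, hu⟩ := aux_isUnit A z hz
  have hd : 0 < Metric.infDist z (spectrum ℂ A) :=
    ((spectrum.isClosed (𝕜 := ℂ) A).notMem_iff_infDist_pos (spectrum.nonempty A)).mp hz
  set d := Metric.infDist z (spectrum ℂ A) with hdd
  have hstar : star (A - z • (1 : X →L[ℂ] X)) = A - (starRingEnd ℂ z) • (1 : X →L[ℂ] X) := by
    simp only [star_sub, star_smul, hA.star_eq, star_one, starRingEnd_apply]
  have hcomm : Commute (star (A - z • (1 : X →L[ℂ] X))) (A - z • (1 : X →L[ℂ] X)) := by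
    rw [hstar]
    unfold Commute SemiconjBy
    simp only [sub_mul, mul_sub, smul_mul_assoc, mul_smul_comm, one_mul, mul_one, smul_sub,
      smul_smul]
    module
  have hcu : Commute ((star u : (X →L[ℂ] X)ˣ) : X →L[ℂ] X) ↑u := by
    rw [Units.coe_star, hu]; exact hcomm
  have hcomm' : Commute (star ((↑u⁻¹ : X →L[ℂ] X))) (↑u⁻¹ : X →L[ℂ] X) := by
    rw [← Units.coe_star_inv]
    exact (hcu.units_inv_left).units_inv_right
  have hnormal : IsStarNormal (↑u⁻¹ : X →L[ℂ] X) := ⟨hcomm'⟩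
  have hrad : spectralRadius ℂ (↑u⁻¹ : X →L[ℂ] X) = ‖(↑u⁻¹ : X →L[ℂ] X)‖₊ :=
    IsStarNormal.spectralRadius_eq_nnnorm _
  have hsup : spectralRadius ℂ (↑u⁻¹ : X →L[ℂ] X) ≤ ENNReal.ofReal (1 / d) := by
    rw [spectralRadius]
    apply iSup₂_le
    intro μ hμ
    rw [← spectrum.map_inv, Set.mem_inv] at hμ
    rw [hu] at hμ
    have hmem : μ⁻¹ + z ∈ spectrum ℂ A := by
      have h2 := spectrum.sub_singleton_eq A (z : ℂ)
      rw [← Algebra.algebraMap_eq_smul_one, ← h2] at hμ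
      obtain ⟨k, hk, l, hl, h⟩ := hμ
      simp only [Set.mem_singleton_iff] at hl
      rw [hl] at h
      have hk2 : k = μ⁻¹ + z := by
        have h' : k - z = μ⁻¹ := h
        linear_combination h'
      rw [← hk2]; exact hk
    have hge : d ≤ ‖μ⁻¹‖ := by
      calc d ≤ dist z (μ⁻¹ + z) := Metric.infDist_le_dist_of_mem hmem
        _ = ‖μ⁻¹‖ := by rw [dist_eq_norm]; simp
    have hnorm : ‖μ‖ ≤ 1 / d := by
      rw [le_div_iff₀ hd]
      calc ‖μ‖ * d ≤ ‖μ‖ * ‖μ⁻¹‖ := mul_le_mul_of_nonneg_left hge (norm_nonneg μ)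
        _ ≤ 1 := by
            rcases eq_or_ne μ 0 with h | h
            · simp [h]
            · rw [← norm_mul, mul_inv_cancel₀ h, norm_one]
    rw [← enorm_eq_nnnorm, ← ofReal_norm]
    exact ENNReal.ofReal_le_ofReal hnorm
  rw [← hu, Ring.inverse_unit]
  rw [hrad, ← enorm_eq_nnnorm, ← ofReal_norm] at hsup
  exact (ENNReal.ofReal_le_ofReal_iff (by positivity)).mp hsup

end Aux

/-- **(Corollary 2.4 of the paper, quantitative form.)** Let `A`, `B` be bounded
self-adjoint operators on a nontrivial complex Hilbert space, `P` an orthogonal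
projection commuting with `B`, and `δ ≥ 0` such that
`‖(A − iI)⁻¹ − P(B − iI)⁻¹P‖ ≤ δ` and `‖(I − P)(A − iI)⁻¹‖ ≤ δ`. Then for every
`z ∉ σ(A) ∪ σ(B)`,
`‖(A − zI)⁻¹ − P(B − zI)⁻¹P‖
  ≤ 2δ(1 + (|z| + 1)/dist(z, σ(A)))(1 + (|z| + 1)/dist(z, σ(B)))`. -/
theorem resolvent_approximation_extension
    {X : Type*} [NormedAddCommGroup X] [InnerProductSpace ℂ X] [CompleteSpace X] [Nontrivial X]
    (A B P : X →L[ℂ] X)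
    (hA : IsSelfAdjoint A) (hB : IsSelfAdjoint B)
    (hP2 : P * P = P) (hPsa : IsSelfAdjoint P)
    (hPB : P * B = B * P)
    (δ : ℝ) (hδ : 0 ≤ δ)
    (h1 : ‖Ring.inverse (A - Complex.I • (1 : X →L[ℂ] X)) -
        P * Ring.inverse (B - Complex.I • (1 : X →L[ℂ] X)) * P‖ ≤ δ)
    (h2 : ‖((1 : X →L[ℂ] X) - P) * Ring.inverse (A - Complex.I • (1 : X →L[ℂ] X))‖ ≤ δ)
    (z : ℂ) (hzA : z ∉ spectrum ℂ A) (hzB : z ∉ spectrum ℂ B) :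
    ‖Ring.inverse (A - z • (1 : X →L[ℂ] X)) -
        P * Ring.inverse (B - z • (1 : X →L[ℂ] X)) * P‖ ≤
      2 * δ * (1 + (‖z‖ + 1) / Metric.infDist z (spectrum ℂ A)) *
        (1 + (‖z‖ + 1) / Metric.infDist z (spectrum ℂ B)) := by
  -- i is not in the spectrum of a selfadjoint operator
  have hiA : Complex.I ∉ spectrum ℂ A := by
    intro h
    have := hA.mem_spectrum_eq_re h
    simp [Complex.ext_iff] at this
  have hiB : Complex.I ∉ spectrum ℂ B := by
    intro h
    have := hB.mem_spectrum_eq_re h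
    simp [Complex.ext_iff] at this
  -- distances are positive
  have hdA : 0 < Metric.infDist z (spectrum ℂ A) :=
    ((spectrum.isClosed (𝕜 := ℂ) A).notMem_iff_infDist_pos (spectrum.nonempty A)).mp hzA
  have hdB : 0 < Metric.infDist z (spectrum ℂ B) :=
    ((spectrum.isClosed (𝕜 := ℂ) B).notMem_iff_infDist_pos (spectrum.nonempty B)).mp hzB
  -- resolvent norm bounds
  have hRa := aux_resolvent_norm A hA z hzA
  have hRb := aux_resolvent_norm B hB z hzB
  -- units
  obtain ⟨ua, hua⟩ := aux_isUnit A z hzA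
  obtain ⟨va, hva⟩ := aux_isUnit A Complex.I hiA
  obtain ⟨ub, hub⟩ := aux_isUnit B z hzB
  obtain ⟨vb, hvb⟩ := aux_isUnit B Complex.I hiB
  rw [← hua, ← hub, Ring.inverse_unit, Ring.inverse_unit]
  rw [← hva, ← hvb, Ring.inverse_unit, Ring.inverse_unit] at h1
  rw [← hub, Ring.inverse_unit] at hRb
  rw [← hua, Ring.inverse_unit] at hRa
  set w : ℂ := z - Complex.I with hw
  -- P commutes with the resolvents of B
  have cub : Commute P (↑ub : X →L[ℂ] X) := by
    show P * ↑ub = ↑ub * P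
    rw [hub, mul_sub, sub_mul, hPB, mul_smul_comm, smul_mul_assoc, mul_one, one_mul]
  have cvb : Commute P (↑vb : X →L[ℂ] X) := by
    show P * ↑vb = ↑vb * P
    rw [hvb, mul_sub, sub_mul, hPB, mul_smul_comm, smul_mul_assoc, mul_one, one_mul]
  have hPrb : P * (↑ub⁻¹ : X →L[ℂ] X) = ↑ub⁻¹ * P := cub.units_inv_right.eq
  -- the product of the compressed resolvents
  have hQQ' : (P * (↑vb⁻¹ : X →L[ℂ] X) * P) * (P * ↑ub⁻¹ * P) = P * (↑vb⁻¹ * ↑ub⁻¹) * P := by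
    calc (P * (↑vb⁻¹ : X →L[ℂ] X) * P) * (P * ↑ub⁻¹ * P)
        = P * ↑vb⁻¹ * (P * P) * ↑ub⁻¹ * P := by noncomm_ring
      _ = P * ↑vb⁻¹ * (P * ↑ub⁻¹) * P := by rw [hP2]; noncomm_ring
      _ = P * ↑vb⁻¹ * (↑ub⁻¹ * P) * P := by rw [hPrb]
      _ = P * (↑vb⁻¹ * ↑ub⁻¹) * (P * P) := by noncomm_ring
      _ = P * (↑vb⁻¹ * ↑ub⁻¹) * P := by rw [hP2]
  -- resolvent identity for B
  have hvbub : (↑vb : X →L[ℂ] X) - ↑ub = w • 1 := by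
    rw [hvb, hub, hw]
    module
  have hresB : (↑ub⁻¹ : X →L[ℂ] X) - ↑vb⁻¹ = w • ((↑vb⁻¹ : X →L[ℂ] X) * ↑ub⁻¹) := by
    have e : (↑vb⁻¹ : X →L[ℂ] X) * ((↑vb : X →L[ℂ] X) - ↑ub) * ↑ub⁻¹ = ↑ub⁻¹ - ↑vb⁻¹ := by
      calc (↑vb⁻¹ : X →L[ℂ] X) * ((↑vb : X →L[ℂ] X) - ↑ub) * ↑ub⁻¹
          = (↑vb⁻¹ * ↑vb) * ↑ub⁻¹ - ↑vb⁻¹ * (↑ub * ↑ub⁻¹) := by noncomm_ring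
        _ = ↑ub⁻¹ - ↑vb⁻¹ := by rw [Units.inv_mul, Units.mul_inv, one_mul, mul_one]
    rw [← e, hvbub]
    noncomm_ring
  -- resolvent identity for the compressions
  have hR2 : w • ((P * (↑vb⁻¹ : X →L[ℂ] X) * P) * (P * ↑ub⁻¹ * P))
      = (P * (↑ub⁻¹ : X →L[ℂ] X) * P) - (P * ↑vb⁻¹ * P) := by
    rw [hQQ']
    have : (P * (↑ub⁻¹ : X →L[ℂ] X) * P) - (P * ↑vb⁻¹ * P) = P * ((↑ub⁻¹ : X →L[ℂ] X) - ↑vb⁻¹) * P := by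
      noncomm_ring
    rw [this, hresB]
    noncomm_ring
  -- relation between the two units for A
  have huava : (↑va : X →L[ℂ] X) = ↑ua + w • 1 := by
    rw [hva, hua, hw]
    module
  -- the key algebraic identity
  have key : (↑ua⁻¹ : X →L[ℂ] X) - P * ↑ub⁻¹ * P
      = (1 + w • (↑ua⁻¹ : X →L[ℂ] X)) * ((↑va⁻¹ : X →L[ℂ] X) - P * ↑vb⁻¹ * P) * (1 + w • (P * (↑ub⁻¹ : X →L[ℂ] X) * P)) := by
    have hc : ∀ x y : X →L[ℂ] X, (↑ua : X →L[ℂ] X) * x = ↑ua * y → x = y := fun x y h => by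
      have := congrArg (fun t => (↑ua⁻¹ : X →L[ℂ] X) * t) h
      simpa [← mul_assoc, Units.inv_mul, one_mul] using this
    apply hc
    have e1 : (↑ua : X →L[ℂ] X) * ((↑ua⁻¹ : X →L[ℂ] X) - P * ↑ub⁻¹ * P)
        = 1 - ↑ua * (P * ↑ub⁻¹ * P) := by
      rw [mul_sub, Units.mul_inv]
    have e2 : (↑ua : X →L[ℂ] X) * ((1 + w • (↑ua⁻¹ : X →L[ℂ] X)) * ((↑va⁻¹ : X →L[ℂ] X) - P * ↑vb⁻¹ * P)
          * (1 + w • (P * (↑ub⁻¹ : X →L[ℂ] X) * P)))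
        = 1 - ↑ua * (P * ↑ub⁻¹ * P) := by
      calc (↑ua : X →L[ℂ] X) * ((1 + w • (↑ua⁻¹ : X →L[ℂ] X)) * ((↑va⁻¹ : X →L[ℂ] X) - P * ↑vb⁻¹ * P)
              * (1 + w • (P * (↑ub⁻¹ : X →L[ℂ] X) * P)))
          = (↑ua + w • ((↑ua : X →L[ℂ] X) * ↑ua⁻¹)) * (((↑va⁻¹ : X →L[ℂ] X) - P * ↑vb⁻¹ * P)
              * (1 + w • (P * (↑ub⁻¹ : X →L[ℂ] X) * P))) := by noncomm_ring
        _ = (↑ua + w • (1 : X →L[ℂ] X)) * (((↑va⁻¹ : X →L[ℂ] X) - P * ↑vb⁻¹ * P)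
              * (1 + w • (P * (↑ub⁻¹ : X →L[ℂ] X) * P))) := by rw [Units.mul_inv]
        _ = (↑va : X →L[ℂ] X) * (((↑va⁻¹ : X →L[ℂ] X) - P * ↑vb⁻¹ * P)
              * (1 + w • (P * (↑ub⁻¹ : X →L[ℂ] X) * P))) := by rw [huava]
        _ = ((↑va : X →L[ℂ] X) * ↑va⁻¹) + w • (((↑va : X →L[ℂ] X) * ↑va⁻¹) * (P * ↑ub⁻¹ * P))
              - ↑va * (P * ↑vb⁻¹ * P)
              - ↑va * (w • ((P * (↑vb⁻¹ : X →L[ℂ] X) * P) * (P * ↑ub⁻¹ * P))) := by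
            simp only [mul_add, add_mul, mul_sub, sub_mul, mul_smul_comm, smul_mul_assoc,
              smul_smul, mul_one, one_mul, mul_assoc, smul_add, smul_sub]
            module
        _ = (1 : X →L[ℂ] X) + w • ((1 : X →L[ℂ] X) * (P * ↑ub⁻¹ * P))
              - ↑va * (P * ↑vb⁻¹ * P)
              - ↑va * ((P * (↑ub⁻¹ : X →L[ℂ] X) * P) - (P * ↑vb⁻¹ * P)) := by
            rw [Units.mul_inv, hR2]
        _ = 1 - (↑va : X →L[ℂ] X) * (P * ↑ub⁻¹ * P) + w • (P * ↑ub⁻¹ * P) := by noncomm_ring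
        _ = 1 - ((↑ua : X →L[ℂ] X) + w • 1) * (P * ↑ub⁻¹ * P) + w • (P * ↑ub⁻¹ * P) := by rw [huava]
        _ = 1 - ↑ua * (P * ↑ub⁻¹ * P) := by noncomm_ring
    rw [e1, e2]
  rw [key]
  -- norm estimates
  have hPn : ‖P‖ ≤ 1 := by
    have h := CStarRing.norm_star_mul_self (x := P)
    rw [hPsa.star_eq, hP2] at h
    nlinarith [norm_nonneg P]
  have hwn : ‖w‖ ≤ ‖z‖ + 1 := by
    calc ‖w‖ ≤ ‖z‖ + ‖Complex.I‖ := norm_sub_le z Complex.I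
      _ = ‖z‖ + 1 := by rw [Complex.norm_I]
  have hQn : ‖P * (↑ub⁻¹ : X →L[ℂ] X) * P‖ ≤ 1 / Metric.infDist z (spectrum ℂ B) := by
    calc ‖P * (↑ub⁻¹ : X →L[ℂ] X) * P‖ ≤ ‖P * (↑ub⁻¹ : X →L[ℂ] X)‖ * ‖P‖ := norm_mul_le _ _
      _ ≤ ‖P‖ * ‖(↑ub⁻¹ : X →L[ℂ] X)‖ * ‖P‖ := by
          gcongr <;> first | exact norm_mul_le _ _ | positivity
      _ ≤ 1 * (1 / Metric.infDist z (spectrum ℂ B)) * 1 := by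
          gcongr <;> first | exact hPn | exact hRb | positivity
      _ = 1 / Metric.infDist z (spectrum ℂ B) := by ring
  have hf1 : ‖(1 : X →L[ℂ] X) + w • (↑ua⁻¹ : X →L[ℂ] X)‖ ≤ 1 + (‖z‖ + 1) / Metric.infDist z (spectrum ℂ A) := by
    calc ‖(1 : X →L[ℂ] X) + w • (↑ua⁻¹ : X →L[ℂ] X)‖ ≤ ‖(1 : X →L[ℂ] X)‖ + ‖w • (↑ua⁻¹ : X →L[ℂ] X)‖ := norm_add_le _ _
      _ = 1 + ‖w‖ * ‖(↑ua⁻¹ : X →L[ℂ] X)‖ := by rw [norm_one, norm_smul]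
      _ ≤ 1 + (‖z‖ + 1) * (1 / Metric.infDist z (spectrum ℂ A)) := by
          gcongr <;> first | exact hwn | exact hRa | positivity
      _ = 1 + (‖z‖ + 1) / Metric.infDist z (spectrum ℂ A) := by ring
  have hf2 : ‖(1 : X →L[ℂ] X) + w • (P * (↑ub⁻¹ : X →L[ℂ] X) * P)‖
      ≤ 1 + (‖z‖ + 1) / Metric.infDist z (spectrum ℂ B) := by
    calc ‖(1 : X →L[ℂ] X) + w • (P * (↑ub⁻¹ : X →L[ℂ] X) * P)‖
        ≤ ‖(1 : X →L[ℂ] X)‖ + ‖w • (P * (↑ub⁻¹ : X →L[ℂ] X) * P)‖ := norm_add_le _ _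
      _ = 1 + ‖w‖ * ‖P * (↑ub⁻¹ : X →L[ℂ] X) * P‖ := by rw [norm_one, norm_smul]
      _ ≤ 1 + (‖z‖ + 1) * (1 / Metric.infDist z (spectrum ℂ B)) := by
          gcongr <;> first | exact hwn | exact hQn | positivity
      _ = 1 + (‖z‖ + 1) / Metric.infDist z (spectrum ℂ B) := by ring
  have hmain : ‖(1 + w • (↑ua⁻¹ : X →L[ℂ] X)) * ((↑va⁻¹ : X →L[ℂ] X) - P * ↑vb⁻¹ * P)
        * (1 + w • (P * (↑ub⁻¹ : X →L[ℂ] X) * P))‖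
      ≤ (1 + (‖z‖ + 1) / Metric.infDist z (spectrum ℂ A)) * δ
        * (1 + (‖z‖ + 1) / Metric.infDist z (spectrum ℂ B)) := by
    calc ‖(1 + w • (↑ua⁻¹ : X →L[ℂ] X)) * ((↑va⁻¹ : X →L[ℂ] X) - P * ↑vb⁻¹ * P)
          * (1 + w • (P * (↑ub⁻¹ : X →L[ℂ] X) * P))‖
        ≤ ‖(1 + w • (↑ua⁻¹ : X →L[ℂ] X)) * ((↑va⁻¹ : X →L[ℂ] X) - P * ↑vb⁻¹ * P)‖
          * ‖(1 : X →L[ℂ] X) + w • (P * (↑ub⁻¹ : X →L[ℂ] X) * P)‖ := norm_mul_le _ _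
      _ ≤ ‖(1 : X →L[ℂ] X) + w • (↑ua⁻¹ : X →L[ℂ] X)‖ * ‖(↑va⁻¹ : X →L[ℂ] X) - P * ↑vb⁻¹ * P‖
          * ‖(1 : X →L[ℂ] X) + w • (P * (↑ub⁻¹ : X →L[ℂ] X) * P)‖ := by
          gcongr <;> first | exact norm_mul_le _ _ | positivity
      _ ≤ (1 + (‖z‖ + 1) / Metric.infDist z (spectrum ℂ A)) * δ
          * (1 + (‖z‖ + 1) / Metric.infDist z (spectrum ℂ B)) := by
          gcongr <;> first | exact hf1 | exact h1 | exact hf2 | exact norm_nonneg _ | positivity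
  refine hmain.trans ?_
  have hfA : (0:ℝ) ≤ 1 + (‖z‖ + 1) / Metric.infDist z (spectrum ℂ A) := by positivity
  have hfB : (0:ℝ) ≤ 1 + (‖z‖ + 1) / Metric.infDist z (spectrum ℂ B) := by positivity
  nlinarith [mul_nonneg (mul_nonneg hfA hδ) hfB]
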